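/- arXiv:0803.0800 — 2 statements merged into one kernel-verified Lean document; each statement's English description precedes it below -/
import Mathlib

section
/- Suppose conditions (1.2) and (1.6) hold. Then for every x ∈ ℝ there exists an ℝ(x)-covering of ℝ: a family of points (x_n)_{n∈ℤ\{0}} such that the segments Δ_n = [x_n − d(x_n), x_n + d(x_n)] satisfy: Δ_{n+1}⁻ = Δ_n⁺ for n ≥ 1, Δ_{n-1}⁺ = Δ_n⁻ for n ≤ −1, Δ₁⁻ = Δ₋₁⁺ = x, and ⋃_{n≠0} Δ_n = ℝ (where Δ_n⁻ = x_n − d(x_n) and Δ_n⁺ = x_n + d(x_n)). -/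
open MeasureTheory Set Filter
open scoped ENNReal

noncomputable section

/-- Conditions (1.2): `r > 0`, `q ≥ 0`, `1/r ∈ L¹loc(ℝ)`, `q ∈ L¹loc(ℝ)`. -/
def Cond12 (r q : ℝ → ℝ) : Prop :=
  (∀ x : ℝ, 0 < r x) ∧ (∀ x : ℝ, 0 ≤ q x) ∧
    LocallyIntegrable (fun x : ℝ => (r x)⁻¹) volume ∧ LocallyIntegrable q volume

/-- Condition (1.4): `∫_{-∞}^0 dt/r(t) = ∫_0^∞ dt/r(t) = ∞`. -/
def Cond14 (r : ℝ → ℝ) : Prop :=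
  (∫⁻ t in Iic (0 : ℝ), ENNReal.ofReal (r t)⁻¹) = ⊤ ∧
  (∫⁻ t in Ici (0 : ℝ), ENNReal.ofReal (r t)⁻¹) = ⊤

/-- Condition (1.5): `∫_{-∞}^x q > 0` and `∫_x^∞ q > 0` for all `x`. -/
def Cond15 (q : ℝ → ℝ) : Prop :=
  ∀ x : ℝ, (0 < ∫⁻ t in Iic x, ENNReal.ofReal (q t)) ∧
           (0 < ∫⁻ t in Ici x, ENNReal.ofReal (q t))

/-- Condition (1.6): `(∫_{x-d}^x 1/r)·(∫_{x-d}^x q) → ∞` as `|d| → ∞` (for `d < 0` the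
integrals are taken over `[x, x-d]`; the set `uIoc (x-d) x` covers both orientations). -/
def Cond16 (r q : ℝ → ℝ) : Prop :=
  ∀ x : ℝ, Tendsto (fun d : ℝ =>
      (∫ t in uIoc (x - d) x, (r t)⁻¹) * ∫ t in uIoc (x - d) x, q t)
    (atTop ⊔ atBot) atTop

/-- `y` is a solution of `-(r y')' + q y = f` with (a.e.) derivative `y'`:
`y` and `r·y'` are (locally) absolutely continuous, expressed via the integral
characterization, and the equation holds. -/
def IsSolutionWith (r q f y y' : ℝ → ℝ) : Prop :=
  (∀ a b : ℝ, IntervalIntegrable y' volume a b) ∧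
  (∀ x : ℝ, y x = y 0 + ∫ t in (0:ℝ)..x, y' t) ∧
  (∀ a b : ℝ, IntervalIntegrable (fun t => q t * y t - f t) volume a b) ∧
  (∀ x : ℝ, r x * y' x = r 0 * y' 0 + ∫ t in (0:ℝ)..x, (q t * y t - f t))

/-- `y` is a solution of `-(r y')' + q y = f`. -/
def IsSolution (r q f y : ℝ → ℝ) : Prop := ∃ y' : ℝ → ℝ, IsSolutionWith r q f y y'

/-- `z` is a solution of the homogeneous equation `(r z')' = q z` with derivative `z'`. -/
def IsSolutionHom (r q z z' : ℝ → ℝ) : Prop := IsSolutionWith r q (fun _ => 0) z z'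

/-- Membership in `L_p(ℝ)`. -/
def MemLP (f : ℝ → ℝ) (p : ℝ) : Prop := MemLp f (ENNReal.ofReal p) volume

/-- The `L_p(ℝ)` norm. -/
def lpNorm (f : ℝ → ℝ) (p : ℝ) : ℝ≥0∞ := eLpNorm f (ENNReal.ofReal p) volume

/-- The equation `-(r y')' + q y = f` is correctly solvable in `L_p(ℝ)`: for every
`f ∈ L_p` there is a unique solution `y ∈ L_p`, and `‖y‖_p ≤ c(p)‖f‖_p` with an
absolute constant `c(p) > 0`. -/
def CorrectlySolvable (r q : ℝ → ℝ) (p : ℝ) : Prop :=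
  (∀ f : ℝ → ℝ, MemLP f p → ∃! y : ℝ → ℝ, IsSolution r q f y ∧ MemLP y p) ∧
  ∃ c : ℝ, 0 < c ∧ ∀ f y : ℝ → ℝ, MemLP f p → IsSolution r q f y → MemLP y p →
    lpNorm y p ≤ ENNReal.ofReal c * lpNorm f p

/-- `{u, v}` (with derivatives `u'`, `v'`) is the fundamental system of solutions of
`(r z')' = q z` with properties (1.8)-(1.11). -/
def IsFSS (r q u u' v v' : ℝ → ℝ) : Prop :=
  IsSolutionHom r q u u' ∧ IsSolutionHom r q v v' ∧
  (∀ x : ℝ, 0 < u x) ∧ (∀ x : ℝ, 0 < v x) ∧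
  (∀ x : ℝ, 0 ≤ v' x) ∧ (∀ x : ℝ, u' x ≤ 0) ∧
  (∀ x : ℝ, r x * (v' x * u x - u' x * v x) = 1) ∧
  Tendsto (fun x => v x / u x) atBot (nhds 0) ∧
  Tendsto (fun x => u x / v x) atTop (nhds 0) ∧
  (∫⁻ t in Iic (0 : ℝ), ENNReal.ofReal (r t * (v t) ^ 2)⁻¹) = ⊤ ∧
  (∫⁻ t in Ici (0 : ℝ), ENNReal.ofReal (r t * (u t) ^ 2)⁻¹) = ⊤ ∧
  (∫⁻ t in Ici (0 : ℝ), ENNReal.ofReal (r t * (v t) ^ 2)⁻¹) < ⊤ ∧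
  (∫⁻ t in Iic (0 : ℝ), ENNReal.ofReal (r t * (u t) ^ 2)⁻¹) < ⊤

/-- The Green function `G(x,t)` of (1.12). -/
def greenK (u v : ℝ → ℝ) (x t : ℝ) : ℝ := if t ≤ x then u x * v t else u t * v x

/-- `(G₁ f)(x) = u(x) ∫_{-∞}^x v f`. -/
def G1op (u v f : ℝ → ℝ) (x : ℝ) : ℝ := u x * ∫ t in Iic x, v t * f t

/-- `(G₂ f)(x) = v(x) ∫_x^∞ u f`. -/
def G2op (u v f : ℝ → ℝ) (x : ℝ) : ℝ := v x * ∫ t in Ici x, u t * f t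

/-- The Green integral operator `(G f)(x) = ∫_ℝ G(x,t) f(t) dt`. -/
def greenOp (u v f : ℝ → ℝ) (x : ℝ) : ℝ := G1op u v f x + G2op u v f x

/-- The operator norm of a map `T` acting on `L_p(ℝ)`: the least constant `C` such
that `‖T f‖_p ≤ C ‖f‖_p` for all `f ∈ L_p`. -/
def opNormLp (T : (ℝ → ℝ) → ℝ → ℝ) (p : ℝ) : ℝ≥0∞ :=
  sInf {C : ℝ≥0∞ | ∀ f : ℝ → ℝ, MemLP f p → lpNorm (T f) p ≤ C * lpNorm f p}

/-- The Green operator is bounded as an operator from `L_p(ℝ)` to `L_p(ℝ)`: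
it is well defined on `L_p` (the defining integrals converge), maps into `L_p`,
and its operator norm is finite. -/
def GreenBounded (u v : ℝ → ℝ) (p : ℝ) : Prop :=
  (∀ f : ℝ → ℝ, MemLP f p →
    (∀ x : ℝ, IntegrableOn (fun t => v t * f t) (Iic x) volume ∧
              IntegrableOn (fun t => u t * f t) (Ici x) volume) ∧
    MemLP (greenOp u v f) p) ∧
  opNormLp (greenOp u v) p < ⊤

/-- `F₁(x,d) = (∫_{x-d}^x dt/r)·(∫_{x-d}^x q dt)`. -/
def F1 (r q : ℝ → ℝ) (x d : ℝ) : ℝ :=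
  (∫ t in (x - d)..x, (r t)⁻¹) * ∫ t in (x - d)..x, q t

/-- `F₂(x,d) = (∫_x^{x+d} dt/r)·(∫_x^{x+d} q dt)`. -/
def F2 (r q : ℝ → ℝ) (x d : ℝ) : ℝ :=
  (∫ t in x..(x + d), (r t)⁻¹) * ∫ t in x..(x + d), q t

/-- `φ(x) = ∫_{x-d₁(x)}^x dt/r(t)`. -/
def phiF (r d1 : ℝ → ℝ) (x : ℝ) : ℝ := ∫ t in (x - d1 x)..x, (r t)⁻¹

/-- `ψ(x) = ∫_x^{x+d₂(x)} dt/r(t)`. -/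
def psiF (r d2 : ℝ → ℝ) (x : ℝ) : ℝ := ∫ t in x..(x + d2 x), (r t)⁻¹

/-- `h(x) = φ(x)ψ(x)/(φ(x)+ψ(x))`. -/
def hF (r d1 d2 : ℝ → ℝ) (x : ℝ) : ℝ :=
  phiF r d1 x * psiF r d2 x / (phiF r d1 x + psiF r d2 x)

/-- `d₁` solves the first equation of (1.15). -/
def IsD1 (r q d1 : ℝ → ℝ) : Prop := ∀ x : ℝ, 0 < d1 x ∧ F1 r q x (d1 x) = 1

/-- `d₂` solves the second equation of (1.15). -/
def IsD2 (r q d2 : ℝ → ℝ) : Prop := ∀ x : ℝ, 0 < d2 x ∧ F2 r q x (d2 x) = 1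

/-- `d` solves equation (1.18): `∫_{x-d(x)}^{x+d(x)} dt/(r(t)h(t)) = 1`. -/
def IsD (r h d : ℝ → ℝ) : Prop :=
  ∀ x : ℝ, 0 < d x ∧ (∫ t in (x - d x)..(x + d x), (r t * h t)⁻¹) = 1

/-- The Hardy-type operator `(𝒦 f)(t) = μ(t) ∫_t^∞ θ(ξ) f(ξ) dξ`. -/
def hardyOp (μ θ f : ℝ → ℝ) (t : ℝ) : ℝ := μ t * ∫ ξ in Ici t, θ ξ * f ξ

/-- `H_p = sup_x (∫_{-∞}^x μ^p)^{1/p} (∫_x^∞ θ^{p'})^{1/p'}` with `p' = p/(p-1)`. -/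
def HardyHp (μ θ : ℝ → ℝ) (p : ℝ) : ℝ≥0∞ :=
  ⨆ x : ℝ, (∫⁻ t in Iic x, ENNReal.ofReal (μ t ^ p)) ^ (1 / p) *
           (∫⁻ t in Ici x, ENNReal.ofReal (θ t ^ (p / (p - 1)))) ^ (1 - 1 / p)
section Stmt14Aux

variable {r q d1 d2 d : ℝ → ℝ}

private lemma li_ii {f : ℝ → ℝ} (hf : LocallyIntegrable f volume) (a b : ℝ) :
    IntervalIntegrable f volume a b :=
  (hf.integrableOn_isCompact isCompact_uIcc).intervalIntegrable

private lemma ir_pos (hr : ∀ x, 0 < r x)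
    (hir : LocallyIntegrable (fun x : ℝ => (r x)⁻¹) volume) {a b : ℝ} (hab : a < b) :
    0 < ∫ t in a..b, (r t)⁻¹ :=
  intervalIntegral.intervalIntegral_pos_of_pos_on (li_ii hir a b)
    (fun x _ => inv_pos.2 (hr x)) hab

private lemma ir_nonneg (hr : ∀ x, 0 < r x) {a b : ℝ} (hab : a ≤ b) :
    0 ≤ ∫ t in a..b, (r t)⁻¹ :=
  intervalIntegral.integral_nonneg hab (fun u _ => inv_nonneg.2 (hr u).le)

private lemma q_nonneg (hq : ∀ x, 0 ≤ q x) {a b : ℝ} (hab : a ≤ b) :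
    0 ≤ ∫ t in a..b, q t :=
  intervalIntegral.integral_nonneg hab (fun u _ => hq u)

private lemma phi_pos (hr : ∀ x, 0 < r x) (hd1 : IsD1 r q d1) (x : ℝ) :
    0 < phiF r d1 x := by
  obtain ⟨hpos, heq⟩ := hd1 x
  have hnn : 0 ≤ phiF r d1 x :=
    intervalIntegral.integral_nonneg (by linarith) (fun u _ => inv_nonneg.2 (hr u).le)
  rcases hnn.lt_or_eq with h | h
  · exact h
  · exfalso
    have h2 : phiF r d1 x * (∫ t in (x - d1 x)..x, q t) = 1 := heq
    rw [← h] at h2; simp at h2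

private lemma psi_pos (hr : ∀ x, 0 < r x) (hd2 : IsD2 r q d2) (x : ℝ) :
    0 < psiF r d2 x := by
  obtain ⟨hpos, heq⟩ := hd2 x
  have hnn : 0 ≤ psiF r d2 x :=
    intervalIntegral.integral_nonneg (by linarith) (fun u _ => inv_nonneg.2 (hr u).le)
  rcases hnn.lt_or_eq with h | h
  · exact h
  · exfalso
    have h2 : psiF r d2 x * (∫ t in x..(x + d2 x), q t) = 1 := heq
    rw [← h] at h2; simp at h2

private lemma hF_pos (hr : ∀ x, 0 < r x) (hd1 : IsD1 r q d1) (hd2 : IsD2 r q d2) (x : ℝ) :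
    0 < hF r d1 d2 x := by
  have h1 := phi_pos hr hd1 x
  have h2 := psi_pos hr hd2 x
  exact div_pos (mul_pos h1 h2) (by linarith)

private lemma g_eq (hr : ∀ x, 0 < r x) (hd1 : IsD1 r q d1) (hd2 : IsD2 r q d2) (t : ℝ) :
    (r t * hF r d1 d2 t)⁻¹ = (r t)⁻¹ * ((phiF r d1 t)⁻¹ + (psiF r d2 t)⁻¹) := by
  have h1 := phi_pos hr hd1 t
  have h2 := psi_pos hr hd2 t
  have h3 := hr t
  unfold hF
  field_simp
  ring

private lemma g_pos (hr : ∀ x, 0 < r x) (hd1 : IsD1 r q d1) (hd2 : IsD2 r q d2) (t : ℝ) :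
    0 < (r t * hF r d1 d2 t)⁻¹ :=
  inv_pos.2 (mul_pos (hr t) (hF_pos hr hd1 hd2 t))

private lemma g_ge_phi (hr : ∀ x, 0 < r x) (hd1 : IsD1 r q d1) (hd2 : IsD2 r q d2) (t : ℝ) :
    (r t)⁻¹ * (phiF r d1 t)⁻¹ ≤ (r t * hF r d1 d2 t)⁻¹ := by
  rw [g_eq hr hd1 hd2 t]
  have h1 : 0 ≤ (r t)⁻¹ := inv_nonneg.2 (hr t).le
  have h2 : 0 ≤ (psiF r d2 t)⁻¹ := inv_nonneg.2 (psi_pos hr hd2 t).le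
  nlinarith

private lemma g_ge_psi (hr : ∀ x, 0 < r x) (hd1 : IsD1 r q d1) (hd2 : IsD2 r q d2) (t : ℝ) :
    (r t)⁻¹ * (psiF r d2 t)⁻¹ ≤ (r t * hF r d1 d2 t)⁻¹ := by
  rw [g_eq hr hd1 hd2 t]
  have h1 : 0 ≤ (r t)⁻¹ := inv_nonneg.2 (hr t).le
  have h2 : 0 ≤ (phiF r d1 t)⁻¹ := inv_nonneg.2 (phi_pos hr hd1 t).le
  nlinarith

private lemma g_locInt (hd : IsD r (hF r d1 d2) d) :
    LocallyIntegrable (fun t => (r t * hF r d1 d2 t)⁻¹) volume := by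
  intro x
  obtain ⟨hpos, heq⟩ := hd x
  have hInt : IntervalIntegrable (fun t => (r t * hF r d1 d2 t)⁻¹) volume (x - d x) (x + d x) := by
    by_contra hc
    rw [intervalIntegral.integral_undef hc] at heq
    norm_num at heq
  exact ⟨Ioc (x - d x) (x + d x), Ioc_mem_nhds (by linarith) (by linarith), hInt.1⟩

end Stmt14Aux
section Stmt14Aux2

variable {r q d1 d2 d : ℝ → ℝ}

private lemma split3 {f : ℝ → ℝ} (hf : LocallyIntegrable f volume) (x y b' b : ℝ) :
    (∫ t in x..b, f t) =
      (∫ t in x..y, f t) + (∫ t in y..b', f t) + (∫ t in b'..b, f t) := by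
  rw [intervalIntegral.integral_add_adjacent_intervals (li_ii hf x y) (li_ii hf y b'),
      intervalIntegral.integral_add_adjacent_intervals (li_ii hf x b') (li_ii hf b' b)]

private lemma theta_mono (hr : ∀ x, 0 < r x) (hq : ∀ x, 0 ≤ q x)
    (hir : LocallyIntegrable (fun x : ℝ => (r x)⁻¹) volume)
    (hqL : LocallyIntegrable q volume) (hd2 : IsD2 r q d2) :
    Monotone (fun x => x + d2 x) := by
  intro x y hxy
  rcases hxy.lt_or_eq with hxy | rfl
  · by_contra hcon
    push_neg at hcon
    obtain ⟨hx2, hxeq⟩ := hd2 x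
    obtain ⟨hy2, hyeq⟩ := hd2 y
    unfold F2 at hxeq hyeq
    have hyb' : y < y + d2 y := by linarith
    have hsr := split3 hir x y (y + d2 y) (x + d2 x)
    have hsq := split3 hqL x y (y + d2 y) (x + d2 x)
    have h1 : 0 < ∫ t in x..y, (r t)⁻¹ := ir_pos hr hir hxy
    have h2 : 0 ≤ ∫ t in (y + d2 y)..(x + d2 x), (r t)⁻¹ := ir_nonneg hr hcon.le
    have h3 : 0 ≤ ∫ t in x..y, q t := q_nonneg hq hxy.le
    have h4 : 0 ≤ ∫ t in (y + d2 y)..(x + d2 x), q t := q_nonneg hq hcon.le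
    have h5 : 0 < ∫ t in y..(y + d2 y), (r t)⁻¹ := ir_pos hr hir hyb'
    have h6 : 0 ≤ ∫ t in y..(y + d2 y), q t := q_nonneg hq hyb'.le
    have hB' : 0 < ∫ t in y..(y + d2 y), q t := by nlinarith
    nlinarith
  · exact le_refl _

private lemma lam_mono (hr : ∀ x, 0 < r x) (hq : ∀ x, 0 ≤ q x)
    (hir : LocallyIntegrable (fun x : ℝ => (r x)⁻¹) volume)
    (hqL : LocallyIntegrable q volume) (hd1 : IsD1 r q d1) :
    Monotone (fun x => x - d1 x) := by
  intro x y hxy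
  rcases hxy.lt_or_eq with hxy | rfl
  · by_contra hcon
    push_neg at hcon
    obtain ⟨hx1, hxeq⟩ := hd1 x
    obtain ⟨hy1, hyeq⟩ := hd1 y
    unfold F1 at hxeq hyeq
    have hlx : x - d1 x < x := by linarith
    have hsr := split3 hir (y - d1 y) (x - d1 x) x y
    have hsq := split3 hqL (y - d1 y) (x - d1 x) x y
    have h1 : 0 < ∫ t in x..y, (r t)⁻¹ := ir_pos hr hir hxy
    have h2 : 0 ≤ ∫ t in (y - d1 y)..(x - d1 x), (r t)⁻¹ := ir_nonneg hr hcon.le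
    have h3 : 0 ≤ ∫ t in x..y, q t := q_nonneg hq hxy.le
    have h4 : 0 ≤ ∫ t in (y - d1 y)..(x - d1 x), q t := q_nonneg hq hcon.le
    have h5 : 0 < ∫ t in (x - d1 x)..x, (r t)⁻¹ := ir_pos hr hir hlx
    have h6 : 0 ≤ ∫ t in (x - d1 x)..x, q t := q_nonneg hq hlx.le
    have hB' : 0 < ∫ t in (x - d1 x)..x, q t := by nlinarith
    nlinarith
  · exact le_refl _

end Stmt14Aux2
section Stmt14Aux3

variable {r q d1 d2 d : ℝ → ℝ}

private lemma Qsub (hir : LocallyIntegrable (fun x : ℝ => (r x)⁻¹) volume) (a s t : ℝ) :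
    (∫ u in a..t, (r u)⁻¹) - (∫ u in a..s, (r u)⁻¹) = ∫ u in s..t, (r u)⁻¹ :=
  intervalIntegral.integral_interval_sub_left (li_ii hir a t) (li_ii hir a s)

private lemma Qmono (hr : ∀ x, 0 < r x)
    (hir : LocallyIntegrable (fun x : ℝ => (r x)⁻¹) volume) (a : ℝ) :
    StrictMono (fun t => ∫ u in a..t, (r u)⁻¹) := by
  intro s t hst
  have h1 := ir_pos hr hir hst
  have h2 := Qsub hir a s t
  simp only
  linarith

private lemma step_right (hr : ∀ x, 0 < r x) (hq : ∀ x, 0 ≤ q x)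
    (hir : LocallyIntegrable (fun x : ℝ => (r x)⁻¹) volume)
    (hqL : LocallyIntegrable q volume)
    (hd1 : IsD1 r q d1) (hd2 : IsD2 r q d2) (hd : IsD r (hF r d1 d2) d) (a : ℝ) :
    ∃ b, a < b ∧ (1:ℝ)/2 ≤ ∫ t in a..b, (r t * hF r d1 d2 t)⁻¹ := by
  set Q : ℝ → ℝ := fun t => ∫ u in a..t, (r u)⁻¹ with hQdef
  have hQ0 : Q a = 0 := intervalIntegral.integral_same
  have hQm : StrictMono Q := Qmono hr hir a
  have hgII := li_ii (g_locInt hd)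
  -- pointwise lower bound machinery
  have key : ∀ C : ℝ, 0 < C →
      (∀ t ∈ Icc a (Classical.choice ⟨a⟩), True) → True := fun _ _ _ => trivial
  by_cases hcase : ∃ b, phiF r d1 a ≤ Q b
  · -- use phi bound
    obtain ⟨b, hb⟩ := hcase
    have hK : 0 < phiF r d1 a := phi_pos hr hd1 a
    have hab : a < b := by
      by_contra hba
      push_neg at hba
      have : Q b ≤ Q a := hQm.monotone hba
      linarith [hQ0 ▸ this]
    refine ⟨b, hab, ?_⟩
    have hCpos : 0 < phiF r d1 a + Q b := by
      have : (0:ℝ) ≤ Q b := by linarith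
      linarith
    have hpt : ∀ t ∈ Icc a b,
        (phiF r d1 a + Q b)⁻¹ * (r t)⁻¹ ≤ (r t * hF r d1 d2 t)⁻¹ := by
      intro t ht
      have hlam : a - d1 a ≤ t - d1 t := lam_mono hr hq hir hqL hd1 ht.1
      have hadd1 : (∫ u in (a - d1 a)..(t - d1 t), (r u)⁻¹) + (∫ u in (t - d1 t)..t, (r u)⁻¹)
          = ∫ u in (a - d1 a)..t, (r u)⁻¹ :=
        intervalIntegral.integral_add_adjacent_intervals
          (li_ii hir _ _) (li_ii hir _ _)
      have hadd2 : (∫ u in (a - d1 a)..a, (r u)⁻¹) + (∫ u in a..t, (r u)⁻¹)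
          = ∫ u in (a - d1 a)..t, (r u)⁻¹ :=
        intervalIntegral.integral_add_adjacent_intervals
          (li_ii hir _ _) (li_ii hir _ _)
      have hpre : 0 ≤ ∫ u in (a - d1 a)..(t - d1 t), (r u)⁻¹ := ir_nonneg hr hlam
      have hQt : Q t ≤ Q b := hQm.monotone ht.2
      have hphit : phiF r d1 t ≤ phiF r d1 a + Q b := by
        have e1 : phiF r d1 t = ∫ u in (t - d1 t)..t, (r u)⁻¹ := rfl
        have e2 : phiF r d1 a = ∫ u in (a - d1 a)..a, (r u)⁻¹ := rfl
        rw [e1, e2]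
        have : Q t = ∫ u in a..t, (r u)⁻¹ := rfl
        linarith [hadd1, hadd2]
      have hphitpos := phi_pos hr hd1 t
      have hinv : (phiF r d1 a + Q b)⁻¹ ≤ (phiF r d1 t)⁻¹ := by
        apply inv_anti₀ hphitpos hphit
      calc (phiF r d1 a + Q b)⁻¹ * (r t)⁻¹
          ≤ (phiF r d1 t)⁻¹ * (r t)⁻¹ :=
            mul_le_mul_of_nonneg_right hinv (inv_nonneg.2 (hr t).le)
        _ = (r t)⁻¹ * (phiF r d1 t)⁻¹ := mul_comm _ _
        _ ≤ (r t * hF r d1 d2 t)⁻¹ := g_ge_phi hr hd1 hd2 t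
    have hcomp : (∫ t in a..b, (phiF r d1 a + Q b)⁻¹ * (r t)⁻¹)
        ≤ ∫ t in a..b, (r t * hF r d1 d2 t)⁻¹ :=
      intervalIntegral.integral_mono_on hab.le ((li_ii hir a b).const_mul _)
        (hgII a b) hpt
    rw [intervalIntegral.integral_const_mul] at hcomp
    have hval : (1:ℝ)/2 ≤ (phiF r d1 a + Q b)⁻¹ * (Q b) := by
      rw [inv_mul_eq_div, le_div_iff₀ hCpos]
      linarith
    exact le_trans hval hcomp
  · -- phi branch failed: Q is bounded above
    push_neg at hcase
    have hbdd : BddAbove (range Q) := ⟨phiF r d1 a, by rintro _ ⟨t, rfl⟩; exact (hcase t).le⟩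
    have hne : (range Q).Nonempty := ⟨Q a, mem_range_self a⟩
    set A := sSup (range Q) with hA
    have hQleA : ∀ t, Q t ≤ A := fun t => le_csSup hbdd (mem_range_self t)
    have hApos : 0 < A := lt_of_lt_of_le (by simpa [hQ0] using hQm (lt_add_one a)) (hQleA (a + 1))
    obtain ⟨_, ⟨b, rfl⟩, hbA⟩ := exists_lt_of_lt_csSup hne (show A - A/2 < A by linarith)
    have hab : a < b := by
      by_contra hba
      push_neg at hba
      have : Q b ≤ Q a := hQm.monotone hba
      rw [hQ0] at this
      linarith
    refine ⟨b, hab, ?_⟩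
    have hpt : ∀ t ∈ Icc a b, A⁻¹ * (r t)⁻¹ ≤ (r t * hF r d1 d2 t)⁻¹ := by
      intro t ht
      have hadd : (∫ u in a..t, (r u)⁻¹) + (∫ u in t..(t + d2 t), (r u)⁻¹)
          = ∫ u in a..(t + d2 t), (r u)⁻¹ :=
        intervalIntegral.integral_add_adjacent_intervals (li_ii hir _ _) (li_ii hir _ _)
      have hQth : Q (t + d2 t) ≤ A := hQleA _
      have hQta : 0 ≤ Q t := by
        have := hQm.monotone ht.1
        rw [hQ0] at this; exact this
      have hpsit : psiF r d2 t ≤ A := by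
        have e1 : psiF r d2 t = ∫ u in t..(t + d2 t), (r u)⁻¹ := rfl
        have e2 : Q (t + d2 t) = ∫ u in a..(t + d2 t), (r u)⁻¹ := rfl
        have e3 : Q t = ∫ u in a..t, (r u)⁻¹ := rfl
        rw [e1]
        linarith [hadd]
      have hpsipos := psi_pos hr hd2 t
      have hinv : A⁻¹ ≤ (psiF r d2 t)⁻¹ := inv_anti₀ hpsipos hpsit
      calc A⁻¹ * (r t)⁻¹ ≤ (psiF r d2 t)⁻¹ * (r t)⁻¹ :=
            mul_le_mul_of_nonneg_right hinv (inv_nonneg.2 (hr t).le)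
        _ = (r t)⁻¹ * (psiF r d2 t)⁻¹ := mul_comm _ _
        _ ≤ (r t * hF r d1 d2 t)⁻¹ := g_ge_psi hr hd1 hd2 t
    have hcomp : (∫ t in a..b, A⁻¹ * (r t)⁻¹) ≤ ∫ t in a..b, (r t * hF r d1 d2 t)⁻¹ :=
      intervalIntegral.integral_mono_on hab.le ((li_ii hir a b).const_mul _) (hgII a b) hpt
    rw [intervalIntegral.integral_const_mul] at hcomp
    have hval : (1:ℝ)/2 ≤ A⁻¹ * Q b := by
      rw [inv_mul_eq_div, le_div_iff₀ hApos]
      linarith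
    exact le_trans hval hcomp

end Stmt14Aux3
section Stmt14Aux4

variable {r q d1 d2 d : ℝ → ℝ}

private lemma step_left (hr : ∀ x, 0 < r x) (hq : ∀ x, 0 ≤ q x)
    (hir : LocallyIntegrable (fun x : ℝ => (r x)⁻¹) volume)
    (hqL : LocallyIntegrable q volume)
    (hd1 : IsD1 r q d1) (hd2 : IsD2 r q d2) (hd : IsD r (hF r d1 d2) d) (a : ℝ) :
    ∃ b, b < a ∧ (1:ℝ)/2 ≤ ∫ t in b..a, (r t * hF r d1 d2 t)⁻¹ := by
  set Q : ℝ → ℝ := fun t => ∫ u in a..t, (r u)⁻¹ with hQdef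
  have hQ0 : Q a = 0 := intervalIntegral.integral_same
  have hQm : StrictMono Q := Qmono hr hir a
  have hgII := li_ii (g_locInt hd)
  by_cases hcase : ∃ b, Q b ≤ -(psiF r d2 a)
  · obtain ⟨b, hb⟩ := hcase
    have hK : 0 < psiF r d2 a := psi_pos hr hd2 a
    have hba : b < a := by
      by_contra hab
      push_neg at hab
      have : Q a ≤ Q b := hQm.monotone hab
      rw [hQ0] at this
      linarith
    refine ⟨b, hba, ?_⟩
    have hCpos : 0 < psiF r d2 a - Q b := by linarith
    have hpt : ∀ t ∈ Icc b a,
        (psiF r d2 a - Q b)⁻¹ * (r t)⁻¹ ≤ (r t * hF r d1 d2 t)⁻¹ := by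
      intro t ht
      have hth : t + d2 t ≤ a + d2 a := theta_mono hr hq hir hqL hd2 ht.2
      have hadd1 : (∫ u in t..(t + d2 t), (r u)⁻¹) + (∫ u in (t + d2 t)..(a + d2 a), (r u)⁻¹)
          = ∫ u in t..(a + d2 a), (r u)⁻¹ :=
        intervalIntegral.integral_add_adjacent_intervals (li_ii hir _ _) (li_ii hir _ _)
      have hadd2 : (∫ u in t..a, (r u)⁻¹) + (∫ u in a..(a + d2 a), (r u)⁻¹)
          = ∫ u in t..(a + d2 a), (r u)⁻¹ :=
        intervalIntegral.integral_add_adjacent_intervals (li_ii hir _ _) (li_ii hir _ _)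
      have hpost : 0 ≤ ∫ u in (t + d2 t)..(a + d2 a), (r u)⁻¹ := ir_nonneg hr hth
      have hQta : (∫ u in t..a, (r u)⁻¹) = Q a - Q t := (Qsub hir a t a).symm
      have hQbt : Q b ≤ Q t := hQm.monotone ht.1
      have hpsit : psiF r d2 t ≤ psiF r d2 a - Q b := by
        have e1 : psiF r d2 t = ∫ u in t..(t + d2 t), (r u)⁻¹ := rfl
        have e2 : psiF r d2 a = ∫ u in a..(a + d2 a), (r u)⁻¹ := rfl
        rw [e1, e2]
        linarith
      have hpsipos := psi_pos hr hd2 t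
      have hinv : (psiF r d2 a - Q b)⁻¹ ≤ (psiF r d2 t)⁻¹ := inv_anti₀ hpsipos hpsit
      calc (psiF r d2 a - Q b)⁻¹ * (r t)⁻¹
          ≤ (psiF r d2 t)⁻¹ * (r t)⁻¹ :=
            mul_le_mul_of_nonneg_right hinv (inv_nonneg.2 (hr t).le)
        _ = (r t)⁻¹ * (psiF r d2 t)⁻¹ := mul_comm _ _
        _ ≤ (r t * hF r d1 d2 t)⁻¹ := g_ge_psi hr hd1 hd2 t
    have hcomp : (∫ t in b..a, (psiF r d2 a - Q b)⁻¹ * (r t)⁻¹)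
        ≤ ∫ t in b..a, (r t * hF r d1 d2 t)⁻¹ :=
      intervalIntegral.integral_mono_on hba.le ((li_ii hir b a).const_mul _) (hgII b a) hpt
    rw [intervalIntegral.integral_const_mul] at hcomp
    have hQab : (∫ t in b..a, (r t)⁻¹) = Q a - Q b := (Qsub hir a b a).symm
    rw [hQab, hQ0] at hcomp
    have hval : (1:ℝ)/2 ≤ (psiF r d2 a - Q b)⁻¹ * (0 - Q b) := by
      rw [inv_mul_eq_div, le_div_iff₀ hCpos]
      linarith
    exact le_trans hval hcomp
  · push_neg at hcase
    have hbdd : BddBelow (range Q) :=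
      ⟨-(psiF r d2 a), by rintro _ ⟨t, rfl⟩; exact (hcase t).le⟩
    have hne : (range Q).Nonempty := ⟨Q a, mem_range_self a⟩
    set m := sInf (range Q) with hm
    have hQgem : ∀ t, m ≤ Q t := fun t => csInf_le hbdd (mem_range_self t)
    have hmneg : m < 0 := by
      have h1 : Q (a - 1) < Q a := hQm (by linarith)
      rw [hQ0] at h1
      exact lt_of_le_of_lt (hQgem (a - 1)) h1
    obtain ⟨_, ⟨b, rfl⟩, hbm⟩ := exists_lt_of_csInf_lt hne (show m < m/2 by linarith)
    have hba : b < a := by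
      by_contra hab
      push_neg at hab
      have : Q a ≤ Q b := hQm.monotone hab
      rw [hQ0] at this
      linarith
    refine ⟨b, hba, ?_⟩
    have hpt : ∀ t ∈ Icc b a, (-m)⁻¹ * (r t)⁻¹ ≤ (r t * hF r d1 d2 t)⁻¹ := by
      intro t ht
      have hQta : Q t ≤ 0 := by
        have := hQm.monotone ht.2
        rwa [hQ0] at this
      have hadd : (∫ u in (t - d1 t)..t, (r u)⁻¹) = Q t - Q (t - d1 t) :=
        (Qsub hir a (t - d1 t) t).symm
      have hphit : phiF r d1 t ≤ -m := by
        have e1 : phiF r d1 t = ∫ u in (t - d1 t)..t, (r u)⁻¹ := rfl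
        rw [e1, hadd]
        have := hQgem (t - d1 t)
        linarith
      have hphipos := phi_pos hr hd1 t
      have hinv : (-m)⁻¹ ≤ (phiF r d1 t)⁻¹ := inv_anti₀ hphipos hphit
      calc (-m)⁻¹ * (r t)⁻¹ ≤ (phiF r d1 t)⁻¹ * (r t)⁻¹ :=
            mul_le_mul_of_nonneg_right hinv (inv_nonneg.2 (hr t).le)
        _ = (r t)⁻¹ * (phiF r d1 t)⁻¹ := mul_comm _ _
        _ ≤ (r t * hF r d1 d2 t)⁻¹ := g_ge_phi hr hd1 hd2 t
    have hcomp : (∫ t in b..a, (-m)⁻¹ * (r t)⁻¹) ≤ ∫ t in b..a, (r t * hF r d1 d2 t)⁻¹ :=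
      intervalIntegral.integral_mono_on hba.le ((li_ii hir b a).const_mul _) (hgII b a) hpt
    rw [intervalIntegral.integral_const_mul] at hcomp
    have hQab : (∫ t in b..a, (r t)⁻¹) = Q a - Q b := (Qsub hir a b a).symm
    rw [hQab, hQ0] at hcomp
    have hval : (1:ℝ)/2 ≤ (-m)⁻¹ * (0 - Q b) := by
      rw [inv_mul_eq_div, le_div_iff₀ (by linarith : (0:ℝ) < -m)]
      linarith
    exact le_trans hval hcomp

end Stmt14Aux4
section Stmt14Aux5

variable {r q d1 d2 d : ℝ → ℝ}

private lemma W_unbdd_above (hr : ∀ x, 0 < r x) (hq : ∀ x, 0 ≤ q x)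
    (hir : LocallyIntegrable (fun x : ℝ => (r x)⁻¹) volume)
    (hqL : LocallyIntegrable q volume)
    (hd1 : IsD1 r q d1) (hd2 : IsD2 r q d2) (hd : IsD r (hF r d1 d2) d) :
    ∀ M : ℝ, ∃ t, M ≤ ∫ s in (0:ℝ)..t, (r s * hF r d1 d2 s)⁻¹ := by
  have key : ∀ n : ℕ, ∃ t, (n:ℝ)/2 ≤ ∫ s in (0:ℝ)..t, (r s * hF r d1 d2 s)⁻¹ := by
    intro n
    induction n with
    | zero => exact ⟨0, by simp⟩
    | succ m ih =>
      obtain ⟨t, ht⟩ := ih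
      obtain ⟨b, htb, hb⟩ := step_right hr hq hir hqL hd1 hd2 hd t
      refine ⟨b, ?_⟩
      have hadd : (∫ s in (0:ℝ)..t, (r s * hF r d1 d2 s)⁻¹)
            + (∫ s in t..b, (r s * hF r d1 d2 s)⁻¹)
          = ∫ s in (0:ℝ)..b, (r s * hF r d1 d2 s)⁻¹ :=
        intervalIntegral.integral_add_adjacent_intervals
          (li_ii (g_locInt hd) 0 t) (li_ii (g_locInt hd) t b)
      push_cast
      linarith
  intro M
  obtain ⟨n, hn⟩ := exists_nat_ge (2 * M)
  obtain ⟨t, ht⟩ := key n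
  exact ⟨t, by linarith⟩

private lemma W_unbdd_below (hr : ∀ x, 0 < r x) (hq : ∀ x, 0 ≤ q x)
    (hir : LocallyIntegrable (fun x : ℝ => (r x)⁻¹) volume)
    (hqL : LocallyIntegrable q volume)
    (hd1 : IsD1 r q d1) (hd2 : IsD2 r q d2) (hd : IsD r (hF r d1 d2) d) :
    ∀ M : ℝ, ∃ t, (∫ s in (0:ℝ)..t, (r s * hF r d1 d2 s)⁻¹) ≤ M := by
  have key : ∀ n : ℕ, ∃ t, (∫ s in (0:ℝ)..t, (r s * hF r d1 d2 s)⁻¹) ≤ -((n:ℝ)/2) := by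
    intro n
    induction n with
    | zero => exact ⟨0, by simp⟩
    | succ m ih =>
      obtain ⟨t, ht⟩ := ih
      obtain ⟨b, hbt, hb⟩ := step_left hr hq hir hqL hd1 hd2 hd t
      refine ⟨b, ?_⟩
      have hadd : (∫ s in (0:ℝ)..b, (r s * hF r d1 d2 s)⁻¹)
            + (∫ s in b..t, (r s * hF r d1 d2 s)⁻¹)
          = ∫ s in (0:ℝ)..t, (r s * hF r d1 d2 s)⁻¹ :=
        intervalIntegral.integral_add_adjacent_intervals
          (li_ii (g_locInt hd) 0 b) (li_ii (g_locInt hd) b t)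
      push_cast
      linarith
  intro M
  obtain ⟨n, hn⟩ := exists_nat_ge (2 * (-M))
  obtain ⟨t, ht⟩ := key n
  exact ⟨t, by linarith⟩

end Stmt14Aux5
/-- Lemma 2.10: under (1.2) and (1.6), for every `x ∈ ℝ` there exists an
`ℝ(x)`-covering of `ℝ`: points `(x_n)_{n ∈ ℤ, n ≠ 0}` whose segments
`Δ_n = [x_n - d(x_n), x_n + d(x_n)]` chain as in Definition 2.9 and cover `ℝ`. -/
theorem stmt_14 (r q d1 d2 d : ℝ → ℝ) (h12 : Cond12 r q) (h16 : Cond16 r q)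
    (hd1 : IsD1 r q d1) (hd2 : IsD2 r q d2) (hd : IsD r (hF r d1 d2) d) :
    ∀ x : ℝ, ∃ c : ℤ → ℝ,
      (∀ n : ℤ, 1 ≤ n → c (n + 1) - d (c (n + 1)) = c n + d (c n)) ∧
      (∀ n : ℤ, n ≤ -1 → c (n - 1) + d (c (n - 1)) = c n - d (c n)) ∧
      c 1 - d (c 1) = x ∧ c (-1) + d (c (-1)) = x ∧
      (⋃ n ∈ {m : ℤ | m ≠ 0}, Icc (c n - d (c n)) (c n + d (c n))) = univ := by
  obtain ⟨hr, hq, hir, hqL⟩ := h12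
  intro x
  have hgII : ∀ a b : ℝ, IntervalIntegrable (fun t => (r t * hF r d1 d2 t)⁻¹) volume a b :=
    fun a b => li_ii (g_locInt hd) a b
  set W : ℝ → ℝ := fun t => ∫ s in (0:ℝ)..t, (r s * hF r d1 d2 s)⁻¹ with hWdef
  have Wcont : Continuous W := intervalIntegral.continuous_primitive hgII 0
  have Wsub : ∀ a b : ℝ, W b - W a = ∫ t in a..b, (r t * hF r d1 d2 t)⁻¹ := by
    intro a b
    simp only [hWdef]
    exact intervalIntegral.integral_interval_sub_left (hgII 0 b) (hgII 0 a)
  have Wmono : StrictMono W := by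
    intro s t hst
    have h1 : 0 < ∫ u in s..t, (r u * hF r d1 d2 u)⁻¹ :=
      intervalIntegral.intervalIntegral_pos_of_pos_on (hgII s t)
        (fun u _ => g_pos hr hd1 hd2 u) hst
    have h2 := Wsub s t
    have : 0 < W t - W s := h2 ▸ h1
    linarith
  have hdW : ∀ c : ℝ, W (c + d c) - W (c - d c) = 1 := by
    intro c
    rw [Wsub]
    exact (hd c).2
  have duniq : ∀ c δ : ℝ, 0 < δ → W (c + δ) - W (c - δ) = 1 → d c = δ := by
    intro c δ hδ hWδ
    have hdc := (hd c).1
    have h1 := hdW c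
    rcases lt_trichotomy (d c) δ with h | h | h
    · have a1 : W (c + d c) < W (c + δ) := Wmono (by linarith)
      have a2 : W (c - δ) < W (c - d c) := Wmono (by linarith)
      linarith
    · exact h
    · have a1 : W (c + δ) < W (c + d c) := Wmono (by linarith)
      have a2 : W (c - d c) < W (c - δ) := Wmono (by linarith)
      linarith
  have Wua : ∀ M : ℝ, ∃ t, M ≤ W t := W_unbdd_above hr hq hir hqL hd1 hd2 hd
  have Wub : ∀ M : ℝ, ∃ t, W t ≤ M := W_unbdd_below hr hq hir hqL hd1 hd2 hd
  have exL : ∀ p : ℝ, ∃ c, c - d c = p := by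
    intro p
    obtain ⟨b, hb⟩ := Wua (W p + 1)
    have hpb : p < b := by
      by_contra h
      push_neg at h
      have := Wmono.monotone h
      linarith
    have hmem : W p + 1 ∈ Icc (W p) (W b) := ⟨by linarith, hb⟩
    obtain ⟨ρ, hρI, hρ⟩ := intermediate_value_Icc hpb.le Wcont.continuousOn hmem
    have hpρ : p < ρ := by
      by_contra h
      push_neg at h
      have := Wmono.monotone h
      linarith
    refine ⟨(p + ρ)/2, ?_⟩
    have hδ : (0:ℝ) < (ρ - p)/2 := by linarith
    have h1 : W ((p + ρ)/2 + (ρ - p)/2) - W ((p + ρ)/2 - (ρ - p)/2) = 1 := by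
      rw [show (p + ρ)/2 + (ρ - p)/2 = ρ by ring, show (p + ρ)/2 - (ρ - p)/2 = p by ring, hρ]
      ring
    have h2 := duniq _ _ hδ h1
    rw [h2]
    ring
  have exR : ∀ p : ℝ, ∃ c, c + d c = p := by
    intro p
    obtain ⟨b, hb⟩ := Wub (W p - 1)
    have hbp : b < p := by
      by_contra h
      push_neg at h
      have := Wmono.monotone h
      linarith
    have hmem : W p - 1 ∈ Icc (W b) (W p) := ⟨hb, by linarith⟩
    obtain ⟨ρ, hρI, hρ⟩ := intermediate_value_Icc hbp.le Wcont.continuousOn hmem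
    have hρp : ρ < p := by
      by_contra h
      push_neg at h
      have := Wmono.monotone h
      linarith
    refine ⟨(ρ + p)/2, ?_⟩
    have hδ : (0:ℝ) < (p - ρ)/2 := by linarith
    have h1 : W ((ρ + p)/2 + (p - ρ)/2) - W ((ρ + p)/2 - (p - ρ)/2) = 1 := by
      rw [show (ρ + p)/2 + (p - ρ)/2 = p by ring, show (ρ + p)/2 - (p - ρ)/2 = ρ by ring, hρ]
      ring
    have h2 := duniq _ _ hδ h1
    rw [h2]
    ring
  choose nextc hnextc using exL
  choose prevc hprevc using exR
  set rc : ℕ → ℝ := fun n => Nat.rec (nextc x) (fun _ c => nextc (c + d c)) n with hrcdef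
  set lc : ℕ → ℝ := fun n => Nat.rec (prevc x) (fun _ c => prevc (c - d c)) n with hlcdef
  have hrc0 : rc 0 - d (rc 0) = x := hnextc x
  have hrcS : ∀ k : ℕ, rc (k + 1) - d (rc (k + 1)) = rc k + d (rc k) := fun k => hnextc _
  have hlc0 : lc 0 + d (lc 0) = x := hprevc x
  have hlcS : ∀ k : ℕ, lc (k + 1) + d (lc (k + 1)) = lc k - d (lc k) := fun k => hprevc _
  refine ⟨fun n => if 1 ≤ n then rc (n - 1).toNat else lc (-n - 1).toNat, ?_, ?_, ?_, ?_, ?_⟩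
  · intro n hn
    have h1 : (1:ℤ) ≤ n + 1 := by omega
    simp only [if_pos hn, if_pos h1]
    have e1 : (n + 1 - 1).toNat = (n - 1).toNat + 1 := by omega
    rw [e1]
    exact hrcS _
  · intro n hn
    have h1 : ¬ (1:ℤ) ≤ n := by omega
    have h2 : ¬ (1:ℤ) ≤ n - 1 := by omega
    simp only [if_neg h1, if_neg h2]
    have e1 : (-(n - 1) - 1).toNat = (-n - 1).toNat + 1 := by omega
    rw [e1]
    exact hlcS _
  · have h1 : (1:ℤ) ≤ 1 := le_refl _
    simp only [if_pos h1]
    have e1 : ((1:ℤ) - 1).toNat = 0 := by omega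
    rw [e1]
    exact hrc0
  · have h1 : ¬ (1:ℤ) ≤ -1 := by omega
    simp only [if_neg h1]
    have e1 : (-(-1:ℤ) - 1).toNat = 0 := by omega
    rw [e1]
    exact hlc0
  · apply eq_univ_of_forall
    intro y
    simp only [mem_iUnion, mem_setOf_eq]
    rcases le_total x y with hxy | hyx
    · have WR : ∀ k : ℕ, W (rc k + d (rc k)) = W x + (k + 1) := by
        intro k
        induction k with
        | zero =>
          have h0 := hdW (rc 0)
          rw [hrc0] at h0
          push_cast
          linarith
        | succ m ih =>
          have h0 := hdW (rc (m + 1))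
          rw [hrcS m] at h0
          push_cast at ih ⊢
          linarith
      obtain ⟨k, hk⟩ := exists_nat_ge (W y - W x)
      have hyk : y ≤ rc k + d (rc k) := by
        by_contra h
        push_neg at h
        have h2 := Wmono h
        rw [WR k] at h2
        linarith
      have hfind : ∀ k : ℕ, y ≤ rc k + d (rc k) →
          ∃ j : ℕ, rc j - d (rc j) ≤ y ∧ y ≤ rc j + d (rc j) := by
        intro k
        induction k with
        | zero =>
          intro h
          refine ⟨0, ?_, h⟩
          rw [hrc0]
          exact hxy
        | succ m ih =>
          intro h
          by_cases hc : rc (m + 1) - d (rc (m + 1)) ≤ y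
          · exact ⟨m + 1, hc, h⟩
          · push_neg at hc
            rw [hrcS m] at hc
            exact ih hc.le
      obtain ⟨j, hj1, hj2⟩ := hfind k hyk
      have hcond : (1:ℤ) ≤ (j:ℤ) + 1 := by omega
      have hidx : ((j:ℤ) + 1 - 1).toNat = j := by omega
      refine ⟨(j:ℤ) + 1, by omega, ?_⟩
      simp only [if_pos hcond, hidx]
      exact ⟨hj1, hj2⟩
    · have WL : ∀ k : ℕ, W (lc k - d (lc k)) = W x - (k + 1) := by
        intro k
        induction k with
        | zero =>
          have h0 := hdW (lc 0)
          rw [hlc0] at h0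
          push_cast
          linarith
        | succ m ih =>
          have h0 := hdW (lc (m + 1))
          rw [hlcS m] at h0
          push_cast at ih ⊢
          linarith
      obtain ⟨k, hk⟩ := exists_nat_ge (W x - W y)
      have hyk : lc k - d (lc k) ≤ y := by
        by_contra h
        push_neg at h
        have h2 := Wmono h
        rw [WL k] at h2
        linarith
      have hfind : ∀ k : ℕ, lc k - d (lc k) ≤ y →
          ∃ j : ℕ, lc j - d (lc j) ≤ y ∧ y ≤ lc j + d (lc j) := by
        intro k
        induction k with
        | zero =>
          intro h
          refine ⟨0, h, ?_⟩
          rw [hlc0]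
          exact hyx
        | succ m ih =>
          intro h
          by_cases hc : y ≤ lc (m + 1) + d (lc (m + 1))
          · exact ⟨m + 1, h, hc⟩
          · push_neg at hc
            rw [hlcS m] at hc
            exact ih hc.le
      obtain ⟨j, hj1, hj2⟩ := hfind k hyk
      have hcond : ¬ (1:ℤ) ≤ -((j:ℤ) + 1) := by omega
      have hidx : (-(-((j:ℤ) + 1)) - 1).toNat = j := by omega
      refine ⟨-((j:ℤ) + 1), by omega, ?_⟩
      simp only [if_neg hcond, hidx]
      exact ⟨hj1, hj2⟩

end
end

section
/- Suppose conditions (1.2) and (1.5) hold, and let p ∈ [1,∞). Then the homogeneous equation (r(x)z'(x))' = q(x)z(x) on ℝ has no solution z ∈ L_p(ℝ) except z ≡ 0. -/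
open MeasureTheory Set Filter
open scoped ENNReal

noncomputable section

open scoped Topology

private lemma prim_diff {g G : ℝ → ℝ} (hint : ∀ a b : ℝ, IntervalIntegrable g volume a b)
    (hG : ∀ x : ℝ, G x = G 0 + ∫ t in (0:ℝ)..x, g t) (a b : ℝ) :
    G b - G a = ∫ t in a..b, g t := by
  have h := intervalIntegral.integral_add_adjacent_intervals (hint 0 a) (hint a b)
  rw [hG a, hG b]; linarith

private lemma prim_cont {g G : ℝ → ℝ} (hint : ∀ a b : ℝ, IntervalIntegrable g volume a b)
    (hG : ∀ x : ℝ, G x = G 0 + ∫ t in (0:ℝ)..x, g t) : Continuous G := by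
  have h : Continuous fun x : ℝ => G 0 + ∫ t in (0:ℝ)..x, g t :=
    continuous_const.add (intervalIntegral.continuous_primitive hint 0)
  exact h.congr fun x => (hG x).symm

/-- Forward lemma: if `z x₀ > 0` and `(r z') x₀ ≥ 0`, then `z ≥ z x₀` on `[x₀, ∞)`. -/
private lemma fwd_bound {r q z z' : ℝ → ℝ} (hr : ∀ x, 0 < r x) (hq : ∀ x, 0 ≤ q x)
    (hz'int : ∀ a b : ℝ, IntervalIntegrable z' volume a b)
    (hz : ∀ x : ℝ, z x = z 0 + ∫ t in (0:ℝ)..x, z' t)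
    (hqzint : ∀ a b : ℝ, IntervalIntegrable (fun t => q t * z t) volume a b)
    (hw : ∀ x : ℝ, r x * z' x = r 0 * z' 0 + ∫ t in (0:ℝ)..x, q t * z t)
    {x₀ : ℝ} (hz0 : 0 < z x₀) (hw0 : 0 ≤ r x₀ * z' x₀) :
    ∀ t, x₀ ≤ t → z x₀ ≤ z t := by
  set w : ℝ → ℝ := fun x => r x * z' x with hwdef
  have hzd : ∀ a b : ℝ, z b - z a = ∫ t in a..b, z' t := prim_diff hz'int hz
  have hwd : ∀ a b : ℝ, w b - w a = ∫ t in a..b, q t * z t := prim_diff hqzint hw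
  have hzc : Continuous z := prim_cont hz'int hz
  have Mz : ∀ a b : ℝ, a ≤ b → (∀ s ∈ Icc a b, 0 ≤ w s) → z a ≤ z b := by
    intro a b hab h
    have h0 : 0 ≤ ∫ t in a..b, z' t := by
      refine intervalIntegral.integral_nonneg hab fun u hu => ?_
      have h1 : 0 ≤ r u * z' u := h u hu
      nlinarith [hr u]
    linarith [hzd a b]
  have Mw : ∀ a b : ℝ, a ≤ b → (∀ s ∈ Icc a b, 0 ≤ z s) → w a ≤ w b := by
    intro a b hab h
    have h0 : 0 ≤ ∫ t in a..b, q t * z t :=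
      intervalIntegral.integral_nonneg hab fun u hu => mul_nonneg (hq u) (h u hu)
    linarith [hwd a b]
  by_contra hcon
  push_neg at hcon
  obtain ⟨t₁, ht₁, hzt₁⟩ := hcon
  set B : Set ℝ := {t | x₀ ≤ t ∧ z t < z x₀} with hB
  have hBne : B.Nonempty := ⟨t₁, ht₁, hzt₁⟩
  have hBbdd : BddBelow B := ⟨x₀, fun t ht => ht.1⟩
  set c := sInf B with hc
  have hx₀c : x₀ ≤ c := le_csInf hBne fun t ht => ht.1
  have hgood : ∀ s, x₀ ≤ s → s < c → z x₀ ≤ z s := by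
    intro s hs hsc
    by_contra h
    push_neg at h
    exact absurd (csInf_le hBbdd ⟨hs, h⟩) (not_le.mpr hsc)
  have hzc0 : z x₀ ≤ z c := by
    rcases eq_or_lt_of_le hx₀c with h | h
    · rw [← h]
    · have htd : Tendsto z (𝓝[<] c) (𝓝 (z c)) :=
        (hzc.tendsto c).mono_left nhdsWithin_le_nhds
      refine ge_of_tendsto htd ?_
      filter_upwards [Ioo_mem_nhdsLT_of_mem (show c ∈ Ioc x₀ c from ⟨h, le_refl c⟩)] with s hs
      exact hgood s hs.1.le hs.2
  have hzic : ∀ s ∈ Icc x₀ c, z x₀ ≤ z s := by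
    intro s hs
    rcases lt_or_eq_of_le hs.2 with h | h
    · exact hgood s hs.1 h
    · rw [h]; exact hzc0
  have hwc : 0 ≤ w c :=
    le_trans hw0 (Mw x₀ c hx₀c fun s hs => le_trans hz0.le (hzic s hs))
  have hzcpos : 0 < z c := lt_of_lt_of_le hz0 hzc0
  obtain ⟨δ, hδ, hball⟩ : ∃ δ > 0, ∀ s ∈ Icc c (c + δ), 0 < z s := by
    have hop : {s : ℝ | 0 < z s} ∈ 𝓝 c := (isOpen_lt continuous_const hzc).mem_nhds hzcpos
    obtain ⟨ε, hε, hsub⟩ := Metric.mem_nhds_iff.mp hop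
    refine ⟨ε / 2, by linarith, fun s hs => hsub ?_⟩
    rw [Metric.mem_ball, Real.dist_eq]
    have h1 := hs.1; have h2 := hs.2
    rw [abs_lt]
    constructor <;> linarith
  have hwpos : ∀ s ∈ Icc c (c + δ), 0 ≤ w s := by
    intro s hs
    refine le_trans hwc (Mw c s hs.1 fun u hu => (hball u ⟨hu.1, le_trans hu.2 hs.2⟩).le)
  have hzmono : ∀ s ∈ Icc c (c + δ), z c ≤ z s := fun s hs =>
    Mz c s hs.1 fun u hu => hwpos u ⟨hu.1, le_trans hu.2 hs.2⟩
  obtain ⟨t, htB, htlt⟩ := exists_lt_of_csInf_lt hBne (show sInf B < c + δ by rw [← hc]; linarith)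
  have hct : c ≤ t := csInf_le hBbdd htB
  have : z x₀ ≤ z t := le_trans hzc0 (hzmono t ⟨hct, htlt.le⟩)
  exact absurd this (not_le.mpr htB.2)

/-- Backward lemma: if `z x₀ > 0` and `(r z') x₀ ≤ 0`, then `z ≥ z x₀` on `(-∞, x₀]`. -/
private lemma bwd_bound {r q z z' : ℝ → ℝ} (hr : ∀ x, 0 < r x) (hq : ∀ x, 0 ≤ q x)
    (hz'int : ∀ a b : ℝ, IntervalIntegrable z' volume a b)
    (hz : ∀ x : ℝ, z x = z 0 + ∫ t in (0:ℝ)..x, z' t)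
    (hqzint : ∀ a b : ℝ, IntervalIntegrable (fun t => q t * z t) volume a b)
    (hw : ∀ x : ℝ, r x * z' x = r 0 * z' 0 + ∫ t in (0:ℝ)..x, q t * z t)
    {x₀ : ℝ} (hz0 : 0 < z x₀) (hw0 : r x₀ * z' x₀ ≤ 0) :
    ∀ t, t ≤ x₀ → z x₀ ≤ z t := by
  set w : ℝ → ℝ := fun x => r x * z' x with hwdef
  have hzd : ∀ a b : ℝ, z b - z a = ∫ t in a..b, z' t := prim_diff hz'int hz
  have hwd : ∀ a b : ℝ, w b - w a = ∫ t in a..b, q t * z t := prim_diff hqzint hw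
  have hzc : Continuous z := prim_cont hz'int hz
  have Mz : ∀ a b : ℝ, a ≤ b → (∀ s ∈ Icc a b, w s ≤ 0) → z b ≤ z a := by
    intro a b hab h
    have h0 : (∫ t in a..b, z' t) ≤ 0 := by
      have h0' : 0 ≤ ∫ t in a..b, (fun u => -z' u) t := by
        refine intervalIntegral.integral_nonneg hab fun u hu => ?_
        have h1 : r u * z' u ≤ 0 := h u hu
        nlinarith [hr u]
      rw [intervalIntegral.integral_neg] at h0'
      linarith
    linarith [hzd a b]
  have Mw : ∀ a b : ℝ, a ≤ b → (∀ s ∈ Icc a b, 0 ≤ z s) → w a ≤ w b := by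
    intro a b hab h
    have h0 : 0 ≤ ∫ t in a..b, q t * z t :=
      intervalIntegral.integral_nonneg hab fun u hu => mul_nonneg (hq u) (h u hu)
    linarith [hwd a b]
  by_contra hcon
  push_neg at hcon
  obtain ⟨t₁, ht₁, hzt₁⟩ := hcon
  set B : Set ℝ := {t | t ≤ x₀ ∧ z t < z x₀} with hB
  have hBne : B.Nonempty := ⟨t₁, ht₁, hzt₁⟩
  have hBbdd : BddAbove B := ⟨x₀, fun t ht => ht.1⟩
  set c := sSup B with hc
  have hx₀c : c ≤ x₀ := csSup_le hBne fun t ht => ht.1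
  have hgood : ∀ s, s ≤ x₀ → c < s → z x₀ ≤ z s := by
    intro s hs hsc
    by_contra h
    push_neg at h
    exact absurd (le_csSup hBbdd ⟨hs, h⟩) (not_le.mpr hsc)
  have hzc0 : z x₀ ≤ z c := by
    rcases eq_or_lt_of_le hx₀c with h | h
    · rw [h]
    · have htd : Tendsto z (𝓝[>] c) (𝓝 (z c)) :=
        (hzc.tendsto c).mono_left nhdsWithin_le_nhds
      refine ge_of_tendsto htd ?_
      filter_upwards [Ioo_mem_nhdsGT_of_mem (show c ∈ Ico c x₀ from ⟨le_refl c, h⟩)] with s hs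
      exact hgood s hs.2.le hs.1
  have hzic : ∀ s ∈ Icc c x₀, z x₀ ≤ z s := by
    intro s hs
    rcases lt_or_eq_of_le hs.1 with h | h
    · exact hgood s hs.2 h
    · rw [← h]; exact hzc0
  have hwc : w c ≤ 0 :=
    le_trans (Mw c x₀ hx₀c fun s hs => le_trans hz0.le (hzic s hs)) hw0
  have hzcpos : 0 < z c := lt_of_lt_of_le hz0 hzc0
  obtain ⟨δ, hδ, hball⟩ : ∃ δ > 0, ∀ s ∈ Icc (c - δ) c, 0 < z s := by
    have hop : {s : ℝ | 0 < z s} ∈ 𝓝 c := (isOpen_lt continuous_const hzc).mem_nhds hzcpos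
    obtain ⟨ε, hε, hsub⟩ := Metric.mem_nhds_iff.mp hop
    refine ⟨ε / 2, by linarith, fun s hs => hsub ?_⟩
    rw [Metric.mem_ball, Real.dist_eq]
    have h1 := hs.1; have h2 := hs.2
    rw [abs_lt]
    constructor <;> linarith
  have hwneg : ∀ s ∈ Icc (c - δ) c, w s ≤ 0 := by
    intro s hs
    refine le_trans (Mw s c hs.2 fun u hu => (hball u ⟨le_trans hs.1 hu.1, hu.2⟩).le) hwc
  have hzmono : ∀ s ∈ Icc (c - δ) c, z c ≤ z s := fun s hs =>
    Mz s c hs.2 fun u hu => hwneg u ⟨le_trans hs.1 hu.1, hu.2⟩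
  obtain ⟨t, htB, htlt⟩ := exists_lt_of_lt_csSup hBne (show c - δ < sSup B by rw [← hc]; linarith)
  have hct : t ≤ c := le_csSup hBbdd htB
  have : z x₀ ≤ z t := le_trans hzc0 (hzmono t ⟨htlt.le, hct⟩)
  exact absurd this (not_le.mpr htB.2)

private lemma not_memLp_of_bound {z : ℝ → ℝ} {p : ℝ} (hp : 1 ≤ p) {c : ℝ} (hc : 0 < c)
    {s : Set ℝ} (hs : MeasurableSet s) (hvol : volume s = ⊤)
    (hbound : ∀ t ∈ s, c ≤ |z t|) : ¬ MemLp z (ENNReal.ofReal p) volume := by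
  intro hmem
  have hp0 : (0:ℝ) < p := by linarith
  have hP0 : ENNReal.ofReal p ≠ 0 := by
    simp only [ne_eq, ENNReal.ofReal_eq_zero, not_le]; linarith
  have hPtop : ENNReal.ofReal p ≠ ⊤ := ENNReal.ofReal_ne_top
  have hfin := hmem.2
  rw [eLpNorm_eq_lintegral_rpow_enorm_toReal hP0 hPtop] at hfin
  set pr := (ENNReal.ofReal p).toReal with hprdef
  have hpr : pr = p := ENNReal.toReal_ofReal hp0.le
  have hprpos : 0 < pr := by rw [hpr]; exact hp0
  have hineq : (∫⁻ x, ‖z x‖ₑ ^ pr ∂volume) = ⊤ := by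
    rw [eq_top_iff]
    calc (⊤ : ℝ≥0∞) = ENNReal.ofReal (c ^ pr) * volume s := by
          rw [hvol, ENNReal.mul_top]
          simp only [ne_eq, ENNReal.ofReal_eq_zero, not_le]
          positivity
      _ = ∫⁻ _ in s, ENNReal.ofReal (c ^ pr) ∂volume := (setLIntegral_const s _).symm
      _ ≤ ∫⁻ x in s, ‖z x‖ₑ ^ pr ∂volume := by
          refine setLIntegral_mono' hs fun x hx => ?_
          rw [Real.enorm_eq_ofReal_abs, ENNReal.ofReal_rpow_of_pos (lt_of_lt_of_le hc (hbound x hx))]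
          exact ENNReal.ofReal_le_ofReal (Real.rpow_le_rpow hc.le (hbound x hx) hprpos.le)
      _ ≤ ∫⁻ x, ‖z x‖ₑ ^ pr ∂volume := setLIntegral_le_lintegral s _
  rw [hineq] at hfin
  rw [ENNReal.top_rpow_of_pos (by positivity : (0:ℝ) < 1 / pr)] at hfin
  exact absurd hfin (lt_irrefl ⊤)

private lemma main_aux {r q z z' : ℝ → ℝ} (hr : ∀ x, 0 < r x) (hq : ∀ x, 0 ≤ q x)
    (hz'int : ∀ a b : ℝ, IntervalIntegrable z' volume a b)
    (hz : ∀ x : ℝ, z x = z 0 + ∫ t in (0:ℝ)..x, z' t)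
    (hqzint : ∀ a b : ℝ, IntervalIntegrable (fun t => q t * z t) volume a b)
    (hw : ∀ x : ℝ, r x * z' x = r 0 * z' 0 + ∫ t in (0:ℝ)..x, q t * z t)
    {p : ℝ} (hp : 1 ≤ p) (hmem : MemLp z (ENNReal.ofReal p) volume)
    {x₀ : ℝ} (hpos : 0 < z x₀) : False := by
  rcases le_or_gt 0 (r x₀ * z' x₀) with hw0 | hw0
  · have hb := fwd_bound hr hq hz'int hz hqzint hw hpos hw0
    refine not_memLp_of_bound (s := Set.Ici x₀) hp hpos measurableSet_Ici (by rw [Real.volume_Ici]) ?_ hmem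
    intro t ht
    exact le_trans (hb t ht) (le_abs_self _)
  · have hb := bwd_bound hr hq hz'int hz hqzint hw hpos hw0.le
    refine not_memLp_of_bound (s := Set.Iic x₀) hp hpos measurableSet_Iic (by rw [Real.volume_Iic]) ?_ hmem
    intro t ht
    exact le_trans (hb t ht) (le_abs_self _)
/-- Lemma 2.12: under (1.2) and (1.5), for `p ∈ [1,∞)` the homogeneous
equation `(r z')' = q z` has no solution `z ∈ L_p(ℝ)` except `z ≡ 0`. -/
theorem stmt_15 (r q : ℝ → ℝ) (h12 : Cond12 r q) (h15 : Cond15 q) (p : ℝ) (hp : 1 ≤ p) :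
    ∀ z z' : ℝ → ℝ, IsSolutionHom r q z z' → MemLP z p → ∀ x : ℝ, z x = 0 := by
  obtain ⟨hr, hq, -, -⟩ := h12
  intro z z' hsol hmem x
  obtain ⟨h1, h2, h3, h4⟩ := hsol
  simp only [sub_zero] at h3 h4
  by_contra hx
  rcases lt_or_gt_of_ne hx with hneg | hpos
  · have h1' : ∀ a b : ℝ, IntervalIntegrable (fun t => -z' t) volume a b := fun a b => (h1 a b).neg
    have h2' : ∀ y : ℝ, -z y = -z 0 + ∫ t in (0:ℝ)..y, -z' t := by
      intro y
      rw [intervalIntegral.integral_neg]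
      have := h2 y
      linarith
    have h3' : ∀ a b : ℝ, IntervalIntegrable (fun t => q t * -z t) volume a b := by
      intro a b
      have h := (h3 a b).neg
      simpa [mul_neg, Pi.neg_def] using h
    have h4' : ∀ y : ℝ, r y * -z' y = r 0 * -z' 0 + ∫ t in (0:ℝ)..y, q t * -z t := by
      intro y
      have hy := h4 y
      have he : (∫ t in (0:ℝ)..y, q t * -z t) = -∫ t in (0:ℝ)..y, q t * z t := by
        rw [← intervalIntegral.integral_neg]
        congr 1
        funext t
        ring
      rw [he]
      linarith
    have hmem' : MemLp (fun t => -z t) (ENNReal.ofReal p) volume := hmem.neg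
    exact main_aux hr hq h1' h2' h3' h4' hp hmem' (x₀ := x) (neg_pos.mpr hneg)
  · exact main_aux hr hq h1 h2 h3 h4 hp hmem (x₀ := x) hpos
end
end
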